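/- Let (M, δ) be a matrix algebra with delta-form. For the GNS space L²(M^{n+1}) with bimodule structure a·⟦x₀⊗…⊗xₙ⟧·b = ⟦a x₀ ⊗ … ⊗ xₙ μ^{-1/2}(b)⟧, the map ⟦x₀ ⊗ … ⊗ xₙ⟧ ↦ ⟦μ^{1/2}(xₙ)* ⊗ … ⊗ μ^{1/2}(x₀)*⟧ is an antiunitary from L²(M^{n+1}) to itself which implements an M-bimodular unitary isomorphism between the conjugate bimodule of L²(M^{n+1}) and L²(M^{n+1}). -/

import Mathlib

open scoped ComplexOrder TensorProduct

namespace Stmt18Aux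
open Matrix

variable (d n : ℕ)

abbrev V (d n : ℕ) := ⨂[ℂ] (_ : Fin (n + 1)), Matrix (Fin d) (Fin d) ℂ

def entryLM (a b : Fin d) : Matrix (Fin d) (Fin d) ℂ →ₗ[ℂ] ℂ where
  toFun x := x a b
  map_add' _ _ := rfl
  map_smul' _ _ := rfl

noncomputable def coordL (m : Fin (n + 1) → Fin d × Fin d) : V d n →ₗ[ℂ] ℂ :=
  PiTensorProduct.lift ((MultilinearMap.mkPiAlgebra ℂ (Fin (n + 1)) ℂ).compLinearMap
    (fun i => entryLM d (m i).1 (m i).2))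

noncomputable def bvec (m : Fin (n + 1) → Fin d × Fin d) : V d n :=
  PiTensorProduct.tprod ℂ (fun i => Matrix.single (m i).1 (m i).2 (1 : ℂ))

lemma coordL_tprod (m : Fin (n + 1) → Fin d × Fin d)
    (x : Fin (n + 1) → Matrix (Fin d) (Fin d) ℂ) :
    coordL d n m (PiTensorProduct.tprod ℂ x) = ∏ i, x i (m i).1 (m i).2 := by
  simp [coordL, entryLM, MultilinearMap.compLinearMap_apply]
  rfl

lemma matrix_expand (A : Matrix (Fin d) (Fin d) ℂ) :
    A = ∑ p : Fin d × Fin d, A p.1 p.2 • Matrix.single p.1 p.2 (1 : ℂ) := by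
  ext a b
  simp [Matrix.sum_apply, Matrix.single, Fintype.sum_prod_type, ite_and,
    Finset.sum_ite_eq', Finset.sum_ite_eq]

lemma expand_tprod (x : Fin (n + 1) → Matrix (Fin d) (Fin d) ℂ) :
    (∑ m : Fin (n + 1) → Fin d × Fin d,
      (∏ i, x i (m i).1 (m i).2) • bvec d n m) = PiTensorProduct.tprod ℂ x := by
  conv_rhs => rw [show x = fun i => ∑ p : Fin d × Fin d,
      x i p.1 p.2 • Matrix.single p.1 p.2 (1 : ℂ) from funext fun i => matrix_expand d (x i)]
  rw [MultilinearMap.map_sum]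
  refine Finset.sum_congr rfl fun m _ => ?_
  rw [MultilinearMap.map_smul_univ]
  rfl


noncomputable def Cmap : V d n → V d n :=
  fun u => ∑ m : Fin (n + 1) → Fin d × Fin d, (starRingEnd ℂ) (coordL d n m u) • bvec d n m

lemma Cmap_add (u v : V d n) : Cmap d n (u + v) = Cmap d n u + Cmap d n v := by
  simp [Cmap, map_add, add_smul, Finset.sum_add_distrib]

lemma Cmap_smul (c : ℂ) (u : V d n) :
    Cmap d n (c • u) = (starRingEnd ℂ) c • Cmap d n u := by
  simp [Cmap, _root_.map_smul, smul_eq_mul, _root_.map_mul, mul_smul, Finset.smul_sum]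

lemma Cmap_tprod (x : Fin (n + 1) → Matrix (Fin d) (Fin d) ℂ) :
    Cmap d n (PiTensorProduct.tprod ℂ x)
      = PiTensorProduct.tprod ℂ (fun i => (x i).map (starRingEnd ℂ)) := by
  rw [← expand_tprod d n (fun i => (x i).map (starRingEnd ℂ))]
  unfold Cmap
  refine Finset.sum_congr rfl fun m _ => ?_
  rw [coordL_tprod, map_prod]
  rfl

noncomputable def gLM (τ : Matrix (Fin d) (Fin d) ℂ) :
    Matrix (Fin d) (Fin d) ℂ →ₗ[ℂ] Matrix (Fin d) (Fin d) ℂ where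
  toFun x := τ * xᵀ * τ⁻¹
  map_add' x y := by simp [Matrix.transpose_add, Matrix.add_mul, Matrix.mul_add]
  map_smul' c x := by simp [Matrix.transpose_smul, Matrix.smul_mul, Matrix.mul_smul]

noncomputable def Lmap (τ : Matrix (Fin d) (Fin d) ℂ) : V d n →ₗ[ℂ] V d n :=
  (PiTensorProduct.map (fun _ => gLM d τ)) ∘ₗ
    (PiTensorProduct.reindex ℂ (fun _ : Fin (n + 1) => Matrix (Fin d) (Fin d) ℂ)
      Fin.revPerm).toLinearMap

lemma Lmap_tprod (τ : Matrix (Fin d) (Fin d) ℂ)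
    (x : Fin (n + 1) → Matrix (Fin d) (Fin d) ℂ) :
    Lmap d n τ (PiTensorProduct.tprod ℂ x)
      = PiTensorProduct.tprod ℂ (fun i => τ * (x (Fin.rev i))ᵀ * τ⁻¹) := by
  simp [Lmap, PiTensorProduct.reindex_tprod, gLM]

noncomputable def Jmap (τ : Matrix (Fin d) (Fin d) ℂ) : V d n → V d n :=
  fun u => Lmap d n τ (Cmap d n u)

lemma Jmap_add (τ : Matrix (Fin d) (Fin d) ℂ) (u v : V d n) :
    Jmap d n τ (u + v) = Jmap d n τ u + Jmap d n τ v := by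
  simp [Jmap, Cmap_add, map_add]

lemma Jmap_smul (τ : Matrix (Fin d) (Fin d) ℂ) (c : ℂ) (u : V d n) :
    Jmap d n τ (c • u) = (starRingEnd ℂ) c • Jmap d n τ u := by
  simp [Jmap, Cmap_smul, _root_.map_smul]

lemma Jmap_tprod (τ : Matrix (Fin d) (Fin d) ℂ)
    (x : Fin (n + 1) → Matrix (Fin d) (Fin d) ℂ) :
    Jmap d n τ (PiTensorProduct.tprod ℂ x)
      = PiTensorProduct.tprod ℂ (fun i => τ * ((x (Fin.rev i)).map (starRingEnd ℂ))ᵀ * τ⁻¹) := by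
  simp [Jmap, Cmap_tprod, Lmap_tprod]

lemma Jmap_tprod_star (τ : Matrix (Fin d) (Fin d) ℂ)
    (hst : star τ = τ) (hst' : star τ⁻¹ = τ⁻¹)
    (x : Fin (n + 1) → Matrix (Fin d) (Fin d) ℂ) :
    Jmap d n τ (PiTensorProduct.tprod ℂ x)
      = PiTensorProduct.tprod ℂ (fun i => star (τ⁻¹ * x (Fin.rev i) * τ)) := by
  rw [Jmap_tprod]
  congr 1
  funext i
  have hA : ((x (Fin.rev i)).map (starRingEnd ℂ))ᵀ = (x (Fin.rev i))ᴴ := by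
    ext a b
    simp [Matrix.conjTranspose_apply, Matrix.transpose_apply, Matrix.map_apply]
  rw [hA, Matrix.star_eq_conjTranspose, Matrix.conjTranspose_mul, Matrix.conjTranspose_mul,
    ← Matrix.star_eq_conjTranspose τ, ← Matrix.star_eq_conjTranspose τ⁻¹, hst, hst',
    Matrix.mul_assoc]


lemma rev_eq_zero_iff' {n : ℕ} (i : Fin (n + 1)) : Fin.rev i = 0 ↔ i = Fin.last n := by
  constructor
  · intro h
    rw [← Fin.rev_rev i, h, Fin.rev_zero]
  · rintro rfl
    exact Fin.rev_last n

lemma rev_eq_last_iff' {n : ℕ} (i : Fin (n + 1)) : Fin.rev i = Fin.last n ↔ i = 0 := by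
  constructor
  · intro h
    rw [← Fin.rev_rev i, h, Fin.rev_last]
  · rintro rfl
    exact Fin.rev_zero n

end Stmt18Aux

/-- Let `M = ℂ^{d×d}` with delta-form `δ(x) = d·tr(xσ)`, `τ = σ^{1/2}`,
`μ^{1/2}(x) = τ⁻¹ x τ`.  On `L²(M^{n+1}) = ⨂_{i : Fin (n+1)} M` with bimodule structure
`a·⟦x₀⊗…⊗xₙ⟧·c = ⟦a x₀ ⊗ … ⊗ xₙ μ^{-1/2}(c)⟧` and inner product
`⟨⟦x⟧,⟦y⟧⟩ = ∏ᵢ δ(yᵢ* xᵢ)`, the map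
`⟦x₀ ⊗ … ⊗ xₙ⟧ ↦ ⟦μ^{1/2}(xₙ)* ⊗ … ⊗ μ^{1/2}(x₀)*⟧` is an antiunitary (additive,
conjugate-linear, bijective, inner-product reversing) which implements an `M`-bimodular
unitary isomorphism between the conjugate bimodule of `L²(M^{n+1})` and `L²(M^{n+1})`. -/
theorem stmt18 (d n : ℕ) (hd : 0 < d)
    (σ τ : Matrix (Fin d) (Fin d) ℂ) (hσ : σ.PosDef)
    (htr : (σ⁻¹).trace = (d : ℂ))
    (hτ : τ.PosDef) (hττ : τ * τ = σ)
    -- the inner product on L²(M^{n+1}), linear in the first variable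
    (ipT : (⨂[ℂ] (_ : Fin (n + 1)), Matrix (Fin d) (Fin d) ℂ) →
      (⨂[ℂ] (_ : Fin (n + 1)), Matrix (Fin d) (Fin d) ℂ) → ℂ)
    (hipT₁ : ∀ u v w, ipT (u + v) w = ipT u w + ipT v w)
    (hipT₂ : ∀ u v w, ipT u (v + w) = ipT u v + ipT u w)
    (hipTt : ∀ x y : Fin (n + 1) → Matrix (Fin d) (Fin d) ℂ,
      ipT (PiTensorProduct.tprod ℂ x) (PiTensorProduct.tprod ℂ y)
        = ∏ i, ((d : ℂ) * ((star (y i)) * (x i) * σ).trace))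
    -- the left and right bimodule actions on L²(M^{n+1})
    (Lact Ract : Matrix (Fin d) (Fin d) ℂ →
      (⨂[ℂ] (_ : Fin (n + 1)), Matrix (Fin d) (Fin d) ℂ) →ₗ[ℂ]
      (⨂[ℂ] (_ : Fin (n + 1)), Matrix (Fin d) (Fin d) ℂ))
    (hLact : ∀ a, Lact a = PiTensorProduct.map (fun i =>
      if i = (0 : Fin (n + 1)) then LinearMap.mulLeft ℂ a else LinearMap.id))
    (hRact : ∀ c, Ract c = PiTensorProduct.map (fun i =>
      if i = Fin.last n then LinearMap.mulRight ℂ (τ * c * τ⁻¹) else LinearMap.id)) :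
    ∃ J : (⨂[ℂ] (_ : Fin (n + 1)), Matrix (Fin d) (Fin d) ℂ) →
        (⨂[ℂ] (_ : Fin (n + 1)), Matrix (Fin d) (Fin d) ℂ),
      (∀ u v, J (u + v) = J u + J v) ∧
      (∀ (c : ℂ) u, J (c • u) = (starRingEnd ℂ c) • J u) ∧
      (∀ x : Fin (n + 1) → Matrix (Fin d) (Fin d) ℂ,
        J (PiTensorProduct.tprod ℂ x)
          = PiTensorProduct.tprod ℂ (fun i => star (τ⁻¹ * x (Fin.rev i) * τ))) ∧
      Function.Bijective J ∧
      (∀ u v, ipT (J u) (J v) = ipT v u) ∧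
      (∀ (p q : Matrix (Fin d) (Fin d) ℂ) u,
        J (Lact (star q) (Ract (star p) u)) = Lact p (Ract q (J u))) := by
  classical
  have hdet : IsUnit τ.det := (Matrix.isUnit_iff_isUnit_det τ).mp hτ.isUnit
  have h1 : τ⁻¹ * τ = 1 := Matrix.nonsing_inv_mul τ hdet
  have h2 : τ * τ⁻¹ = 1 := Matrix.mul_nonsing_inv τ hdet
  have hst : star τ = τ := by
    rw [Matrix.star_eq_conjTranspose]; exact hτ.isHermitian
  have hst' : star τ⁻¹ = τ⁻¹ := by
    rw [Matrix.star_eq_conjTranspose, Matrix.conjTranspose_nonsing_inv, hτ.isHermitian]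
  have hca : ∀ z : Matrix (Fin d) (Fin d) ℂ, τ * (τ⁻¹ * z) = z := fun z => by
    rw [← Matrix.mul_assoc, h2, Matrix.one_mul]
  have hcb : ∀ z : Matrix (Fin d) (Fin d) ℂ, τ⁻¹ * (τ * z) = z := fun z => by
    rw [← Matrix.mul_assoc, h1, Matrix.one_mul]
  have hJadd := Stmt18Aux.Jmap_add d n τ
  have hJsmul := Stmt18Aux.Jmap_smul d n τ
  have hJt := Stmt18Aux.Jmap_tprod_star d n τ hst hst'
  -- absorbing a scalar into a pure tensor
  have habs : ∀ (r : ℂ) (f : Fin (n + 1) → Matrix (Fin d) (Fin d) ℂ),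
      r • (PiTensorProduct.tprod ℂ f)
        = PiTensorProduct.tprod ℂ (Function.update f 0 (r • f 0)) := by
    intro r f
    rw [MultilinearMap.map_update_smul, Function.update_eq_self]
  -- J is an involution
  have hinv : Function.Involutive (Stmt18Aux.Jmap d n τ) := by
    intro u
    induction u using PiTensorProduct.induction_on with
    | smul_tprod r f =>
      rw [hJsmul, hJsmul, Complex.conj_conj, hJt, hJt]
      refine congrArg (HSMul.hSMul r) (congrArg ⇑(PiTensorProduct.tprod ℂ) (funext fun i => ?_))
      rw [Fin.rev_rev]
      simp only [star_mul, star_star, hst, hst', Matrix.mul_assoc, hca, hcb, h1, h2,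
        Matrix.mul_one, Matrix.one_mul]
    | add x y hx hy => rw [hJadd, hJadd, hx, hy]
  -- the inner-product identity for pure tensors
  have hiptt : ∀ x y : Fin (n + 1) → Matrix (Fin d) (Fin d) ℂ,
      ipT (Stmt18Aux.Jmap d n τ (PiTensorProduct.tprod ℂ x))
          (Stmt18Aux.Jmap d n τ (PiTensorProduct.tprod ℂ y))
        = ipT (PiTensorProduct.tprod ℂ y) (PiTensorProduct.tprod ℂ x) := by
    intro x y
    rw [hJt, hJt, hipTt, hipTt]
    rw [← Equiv.prod_comp (Fin.revPerm : Equiv.Perm (Fin (n + 1)))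
      (fun j => (d : ℂ) * ((star (x j)) * (y j) * σ).trace)]
    refine Finset.prod_congr rfl fun i _ => ?_
    have hrp : (Fin.revPerm : Equiv.Perm (Fin (n + 1))) i = Fin.rev i := rfl
    rw [hrp]
    congr 1
    set A := x (Fin.rev i) with hA
    set B := y (Fin.rev i) with hB
    have hsA : star (τ⁻¹ * A * τ) = τ * (star A * τ⁻¹) := by
      rw [star_mul, star_mul, hst, hst']
    have hτσ : τ⁻¹ * σ = τ := by rw [← hττ, ← Matrix.mul_assoc, h1, Matrix.one_mul]
    have hσ2 : ∀ z : Matrix (Fin d) (Fin d) ℂ, τ * (τ * z) = σ * z := fun z => by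
      rw [← Matrix.mul_assoc, hττ]
    rw [star_star]
    calc ((τ⁻¹ * B * τ) * star (τ⁻¹ * A * τ) * σ).trace
        = (τ⁻¹ * (B * (σ * (star A * τ)))).trace := by
          rw [hsA]; simp only [Matrix.mul_assoc, hτσ, hσ2]
      _ = ((B * (σ * (star A * τ))) * τ⁻¹).trace := Matrix.trace_mul_comm _ _
      _ = ((B * σ) * star A).trace := by
          simp only [Matrix.mul_assoc, h2, Matrix.mul_one]
      _ = (star A * (B * σ)).trace := Matrix.trace_mul_comm _ _
      _ = (star A * B * σ).trace := by rw [Matrix.mul_assoc]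
  -- the bimodularity identity for pure tensors
  have hbit : ∀ (p q : Matrix (Fin d) (Fin d) ℂ)
      (x : Fin (n + 1) → Matrix (Fin d) (Fin d) ℂ),
      Stmt18Aux.Jmap d n τ (Lact (star q) (Ract (star p) (PiTensorProduct.tprod ℂ x)))
        = Lact p (Ract q (Stmt18Aux.Jmap d n τ (PiTensorProduct.tprod ℂ x))) := by
    intro p q x
    rw [hRact (star p), hRact q, hLact (star q), hLact p,
      PiTensorProduct.map_tprod, PiTensorProduct.map_tprod, hJt, hJt,
      PiTensorProduct.map_tprod, PiTensorProduct.map_tprod]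
    refine congrArg ⇑(PiTensorProduct.tprod ℂ) (funext fun i => ?_)
    simp only [Stmt18Aux.rev_eq_zero_iff', Stmt18Aux.rev_eq_last_iff']
    split_ifs with hA hB hB
    all_goals
      simp only [LinearMap.mulLeft_apply, LinearMap.mulRight_apply, LinearMap.id_coe, id_eq,
        star_mul, star_star, hst, hst', Matrix.mul_assoc, hca, hcb, h1, h2,
        Matrix.mul_one, Matrix.one_mul]
  refine ⟨Stmt18Aux.Jmap d n τ, hJadd, hJsmul, hJt, hinv.bijective, ?_, ?_⟩
  · intro u v
    induction u using PiTensorProduct.induction_on with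
    | smul_tprod r f =>
      rw [habs]
      induction v using PiTensorProduct.induction_on with
      | smul_tprod s g => rw [habs]; exact hiptt _ _
      | add v₁ v₂ hv₁ hv₂ => rw [hJadd, hipT₂, hipT₁, hv₁, hv₂]
    | add u₁ u₂ hu₁ hu₂ => rw [hJadd, hipT₁, hipT₂, hu₁, hu₂]
  · intro p q u
    induction u using PiTensorProduct.induction_on with
    | smul_tprod r f =>
      rw [LinearMap.map_smul (Ract (star p)), LinearMap.map_smul (Lact (star q)),
        hJsmul, hJsmul, LinearMap.map_smul (Ract q), LinearMap.map_smul (Lact p), hbit]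
    | add u₁ u₂ h₁ h₂ =>
      rw [LinearMap.map_add (Ract (star p)), LinearMap.map_add (Lact (star q)),
        hJadd, hJadd, LinearMap.map_add (Ract q), LinearMap.map_add (Lact p), h₁, h₂]
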